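/- Let k ≥ 1, and let p₁,…,p_k and z₁,…,z_k be elements of a commutative ring with the z_i invertible. Define S(u) = M_k(u)⋯M₁(u) where M_i(u) is the 2×2 matrix [[u − p_i, z_i], [−z_i^{-1}, 0]] over the polynomial ring in u. Then: (a) det S(u) = 1; (b) the (1,1) entry Q(u) of S(u) is a monic polynomial of degree k in u with Q(u) = u^k − (Σ_i p_i) u^{k-1} + (Σ_{i<j} p_i p_j − Σ_{i=1}^{k-1} z_{i+1} z_i^{-1}) u^{k-2} + (lower order). -/

import Mathlib

open Polynomial

/-- The elementary monopole scattering factor `Mᵢ(u) = [[u − pᵢ, zᵢ], [−zᵢ⁻¹, 0]]`. -/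
noncomputable def todaFactor {R : Type} [CommRing R] {K : ℕ}
    (p : Fin K → R) (z : Fin K → Rˣ) (i : Fin K) :
    Matrix (Fin 2) (Fin 2) (Polynomial R) :=
  !![X - C (p i), C ((z i : R));
     -C (((z i)⁻¹ : Rˣ) : R), 0]

/-- The factorized scattering matrix `S(u) = M_K(u) ⋯ M₁(u)`. -/
noncomputable def todaS {R : Type} [CommRing R] {K : ℕ}
    (p : Fin K → R) (z : Fin K → Rˣ) : Matrix (Fin 2) (Fin 2) (Polynomial R) :=
  ((List.ofFn (todaFactor p z)).reverse).prod

section aux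
variable {R : Type} [CommRing R]

noncomputable def todaQT (P : ℕ → R) (Z : ℕ → Rˣ) : ℕ → Polynomial R × Polynomial R
  | 0 => (1, 0)
  | n+1 => ((X - C (P n)) * (todaQT P Z n).1 + C ((Z n : R)) * (todaQT P Z n).2,
            -C ((((Z n)⁻¹ : Rˣ) : R)) * (todaQT P Z n).1)

lemma todaS_succ {K : ℕ} (p : Fin (K+1) → R) (z : Fin (K+1) → Rˣ) :
    todaS p z = todaFactor p z (Fin.last K) *
      todaS (p ∘ Fin.castSucc) (z ∘ Fin.castSucc) := by
  unfold todaS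
  rw [List.ofFn_succ']
  have : todaFactor (p ∘ Fin.castSucc) (z ∘ Fin.castSucc) =
      (todaFactor p z) ∘ Fin.castSucc := by
    funext i; simp [todaFactor, Function.comp]
  rw [this]
  simp only [List.concat_eq_append, List.reverse_append, List.reverse_cons, List.reverse_nil,
    List.nil_append, List.singleton_append, List.prod_cons]
  rfl

lemma todaS_entries {K : ℕ} (p : Fin K → R) (z : Fin K → Rˣ)
    (P : ℕ → R) (Z : ℕ → Rˣ) (hP : ∀ i : Fin K, P i = p i)
    (hZ : ∀ i : Fin K, Z i = z i) :
    todaS p z 0 0 = (todaQT P Z K).1 ∧ todaS p z 1 0 = (todaQT P Z K).2 := by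
  induction K with
  | zero =>
    constructor <;> simp [todaS, todaQT, Matrix.one_apply]
  | succ n ih =>
    obtain ⟨h1, h2⟩ := ih (p ∘ Fin.castSucc) (z ∘ Fin.castSucc)
      (fun i => by simpa using hP i.castSucc) (fun i => by simpa using hZ i.castSucc)
    rw [todaS_succ]
    have e1 : P n = p (Fin.last n) := hP (Fin.last n)
    have e2 : Z n = z (Fin.last n) := hZ (Fin.last n)
    constructor <;>
    · simp only [Matrix.mul_apply, Fin.sum_univ_two, todaFactor, todaQT,
        Matrix.cons_val_zero, Matrix.cons_val_one, Matrix.head_cons, Matrix.head_fin_const,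
        Matrix.cons_val', Matrix.empty_val', Matrix.cons_val_fin_one, Matrix.of_apply]
      rw [h1, h2]
      simp only [e1, e2]
      try ring

end aux

section coeffs
variable {R : Type} [CommRing R] [Nontrivial R] (P : ℕ → R) (Z : ℕ → Rˣ)

noncomputable def todaC1 (n : ℕ) : R := -(∑ i ∈ Finset.range n, P i)

noncomputable def todaC2 (n : ℕ) : R :=
  (∑ j ∈ Finset.range n, ∑ i ∈ Finset.range j, P i * P j)
  - ∑ i ∈ Finset.range (n-1), ((Z (i+1) : R) * (((Z i)⁻¹ : Rˣ) : R))

lemma todaQT_one : (todaQT P Z 1).1 = X - C (P 0) := by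
  simp [todaQT]

lemma todaQT_rec (n : ℕ) :
    (todaQT P Z (n+2)).1 = (X - C (P (n+1))) * (todaQT P Z (n+1)).1
      - C ((Z (n+1) : R) * (((Z n)⁻¹ : Rˣ) : R)) * (todaQT P Z n).1 := by
  show (X - C (P (n+1))) * (todaQT P Z (n+1)).1 + C ((Z (n+1) : R)) * (todaQT P Z (n+1)).2 = _
  show _ + C ((Z (n+1) : R)) * (-C ((((Z n)⁻¹ : Rˣ) : R)) * (todaQT P Z n).1) = _
  rw [C_mul]
  ring

lemma coeff_X_sub_C_mul (a : R) (q : Polynomial R) (m : ℕ) :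
    ((X - C a) * q).coeff (m+1) = q.coeff m - a * q.coeff (m+1) := by
  simp [sub_mul, coeff_X_mul, coeff_C_mul]

lemma coeff_X_sub_C_mul_zero (a : R) (q : Polynomial R) :
    ((X - C a) * q).coeff 0 = -(a * q.coeff 0) := by
  simp [sub_mul, mul_coeff_zero]

def todaSt (n : ℕ) : Prop :=
  ((todaQT P Z n).1).Monic ∧ ((todaQT P Z n).1).natDegree = n ∧
  (1 ≤ n → ((todaQT P Z n).1).coeff (n-1) = todaC1 P n) ∧
  (2 ≤ n → ((todaQT P Z n).1).coeff (n-2) = todaC2 P Z n)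

lemma todaSt_zero : todaSt P Z 0 := by
  refine ⟨?_, ?_, ?_, ?_⟩ <;> simp [todaSt, todaQT]

lemma todaSt_one : todaSt P Z 1 := by
  refine ⟨?_, ?_, ?_, ?_⟩ <;>
    simp [todaQT_one, monic_X_sub_C, natDegree_X_sub_C, todaC1]

lemma todaSt_step (n : ℕ) (h0 : todaSt P Z n) (h1 : todaSt P Z (n+1)) :
    todaSt P Z (n+2) := by
  obtain ⟨hm0, hd0, hc0, hc0'⟩ := h0
  obtain ⟨hm1, hd1, hc1, hc1'⟩ := h1
  set a := P (n+1) with ha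
  set w := ((Z (n+1) : R) * (((Z n)⁻¹ : Rˣ) : R)) with hw
  have hrec := todaQT_rec P Z n
  have hmprod : ((X - C a) * (todaQT P Z (n+1)).1).Monic := (monic_X_sub_C a).mul hm1
  have hdprod : ((X - C a) * (todaQT P Z (n+1)).1).natDegree = n + 2 := by
    rw [(monic_X_sub_C a).natDegree_mul hm1, natDegree_X_sub_C, hd1]
    omega
  have hdlt : (-(C w * (todaQT P Z n).1)).degree
      < ((X - C a) * (todaQT P Z (n+1)).1).degree := by
    rw [degree_neg, degree_eq_natDegree hmprod.ne_zero, hdprod]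
    calc (C w * (todaQT P Z n).1).degree ≤ (todaQT P Z n).1.degree := by
          apply le_trans (degree_mul_le _ _)
          simpa using add_le_add degree_C_le (le_refl (todaQT P Z n).1.degree)
      _ ≤ (n : WithBot ℕ) := by simpa [hd0] using degree_le_natDegree (p := (todaQT P Z n).1)
      _ < ((n+2 : ℕ) : WithBot ℕ) := by exact_mod_cast by omega
  have hrec' : (todaQT P Z (n+2)).1
      = (X - C a) * (todaQT P Z (n+1)).1 + -(C w * (todaQT P Z n).1) := by
    rw [hrec]; ring
  have hmon : ((todaQT P Z (n+2)).1).Monic := by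
    rw [hrec']; exact hmprod.add_of_left hdlt
  have hdeg : ((todaQT P Z (n+2)).1).natDegree = n + 2 := by
    apply natDegree_eq_of_degree_eq_some
    rw [hrec', degree_add_eq_left_of_degree_lt hdlt,
      degree_eq_natDegree hmprod.ne_zero, hdprod]
  refine ⟨hmon, hdeg, ?_, ?_⟩
  · intro _
    show ((todaQT P Z (n+2)).1).coeff (n+1) = _
    rw [hrec, coeff_sub, _root_.coeff_X_sub_C_mul, coeff_C_mul]
    have e1 : ((todaQT P Z (n+1)).1).coeff n = todaC1 P (n+1) := hc1 (by omega)
    have e2 : ((todaQT P Z (n+1)).1).coeff (n+1) = 1 := by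
      have := hm1.coeff_natDegree; rwa [hd1] at this
    have e3 : ((todaQT P Z n).1).coeff (n+1) = 0 :=
      coeff_eq_zero_of_natDegree_lt (by omega)
    rw [e1, e2, e3, mul_one, mul_zero, sub_zero]
    show _ = -(∑ i ∈ Finset.range (n+2), P i)
    rw [Finset.sum_range_succ (n := n+1)]
    show todaC1 P (n+1) - _ = _
    rw [todaC1]
    ring
  · intro _
    show ((todaQT P Z (n+2)).1).coeff n = _
    cases n with
    | zero =>
      rw [hrec, coeff_sub, coeff_X_sub_C_mul_zero, coeff_C_mul, todaQT_one]
      have e0 : ((todaQT P Z 0).1).coeff 0 = 1 := by simp [todaQT]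
      rw [e0]
      show -((P 1) * (X - C (P 0)).coeff 0) - _ * 1 = _
      show _ = (∑ j ∈ Finset.range 2, ∑ i ∈ Finset.range j, P i * P j)
        - ∑ i ∈ Finset.range 1, ((Z (i+1) : R) * (((Z i)⁻¹ : Rˣ) : R))
      simp only [coeff_sub, coeff_X_zero, coeff_C_zero,
        Finset.sum_range_succ, Finset.sum_range_zero, Finset.sum_range_one]
      ring
    | succ m =>
      rw [hrec, coeff_sub, _root_.coeff_X_sub_C_mul, coeff_C_mul]
      have e1 : ((todaQT P Z (m+2)).1).coeff m = todaC2 P Z (m+2) := hc1' (by omega)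
      have e2 : ((todaQT P Z (m+2)).1).coeff (m+1) = todaC1 P (m+2) := hc1 (by omega)
      have e3 : ((todaQT P Z (m+1)).1).coeff (m+1) = 1 := by
        have := hm0.coeff_natDegree; rwa [hd0] at this
      rw [e1, e2, e3, mul_one]
      have key : todaC2 P Z (m+3) = todaC2 P Z (m+2)
          + (∑ i ∈ Finset.range (m+2), P i) * P (m+2)
          - ((Z (m+2) : R) * (((Z (m+1))⁻¹ : Rˣ) : R)) := by
        show (∑ j ∈ Finset.range (m+3), ∑ i ∈ Finset.range j, P i * P j)
            - ∑ i ∈ Finset.range (m+2), ((Z (i+1) : R) * (((Z i)⁻¹ : Rˣ) : R)) = _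
        rw [Finset.sum_range_succ (n := m+2), Finset.sum_range_succ
          (f := fun i => ((Z (i+1) : R) * (((Z i)⁻¹ : Rˣ) : R))) (n := m+1),
          ← Finset.sum_mul]
        show _ = (∑ j ∈ Finset.range (m+2), ∑ i ∈ Finset.range j, P i * P j)
            - ∑ i ∈ Finset.range (m+1), ((Z (i+1) : R) * (((Z i)⁻¹ : Rˣ) : R))
            + (∑ i ∈ Finset.range (m+2), P i) * P (m+2)
            - ((Z (m+2) : R) * (((Z (m+1))⁻¹ : Rˣ) : R))
        ring
      show _ = todaC2 P Z (m+3)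
      rw [key]
      show todaC2 P Z (m+2) - P (m+2) * todaC1 P (m+2) - _ = _
      rw [todaC1]
      ring

lemma todaSt_all (n : ℕ) : todaSt P Z n := by
  suffices h : ∀ m, todaSt P Z m ∧ todaSt P Z (m+1) from (h n).1
  intro m
  induction m with
  | zero => exact ⟨todaSt_zero P Z, todaSt_one P Z⟩
  | succ k ih => exact ⟨ih.2, todaSt_step P Z k ih.1 ih.2⟩

end coeffs

/-- Factorized monopole scattering matrix for `K` smooth `U(2)` monopoles:
`det S(u) = 1`, and the `(1,1)` entry `Q(u)` is monic of degree `K` with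
subleading coefficients `−Σ pᵢ` and (for `K ≥ 2`)
`Σ_{i<j} pᵢpⱼ − Σ_i z_{i+1} zᵢ⁻¹` (the open Toda Hamiltonian). -/
theorem toda_scattering_factorization
    (R : Type) [CommRing R] [Nontrivial R]
    (K : ℕ) (hK : 1 ≤ K) (p : Fin K → R) (z : Fin K → Rˣ) :
    (todaS p z).det = 1 ∧
    (todaS p z 0 0).Monic ∧
    (todaS p z 0 0).natDegree = K ∧
    (todaS p z 0 0).coeff (K - 1) = -(∑ i : Fin K, p i) ∧
    (2 ≤ K →
      (todaS p z 0 0).coeff (K - 2) =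
        (∑ ij ∈ Finset.univ.filter (fun ij : Fin K × Fin K => ij.1 < ij.2),
            p ij.1 * p ij.2) -
          ∑ i : Fin K,
            (if h : (i : ℕ) + 1 < K then
              ((z ⟨(i : ℕ) + 1, h⟩ : R) * (((z i)⁻¹ : Rˣ) : R)) else 0)) := by
  classical
  set P : ℕ → R := fun i => if h : i < K then p ⟨i, h⟩ else 0 with hPdef
  set Z : ℕ → Rˣ := fun i => if h : i < K then z ⟨i, h⟩ else 1 with hZdef
  have hP : ∀ i : Fin K, P i = p i := by
    intro i; simp [hPdef, i.isLt]
  have hZ : ∀ i : Fin K, Z i = z i := by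
    intro i; simp [hZdef, i.isLt]
  obtain ⟨hQ, hT⟩ := todaS_entries p z P Z hP hZ
  obtain ⟨hmon, hdeg, hc1, hc2⟩ := todaSt_all P Z K
  have hsum1 : ∑ i : Fin K, p i = ∑ i ∈ Finset.range K, P i := by
    rw [← Fin.sum_univ_eq_sum_range (fun i => P i) K]
    exact Finset.sum_congr rfl fun i _ => (hP i).symm
  refine ⟨?_, ?_, ?_, ?_, ?_⟩
  · unfold todaS
    rw [← Matrix.coe_detMonoidHom, map_list_prod]
    apply List.prod_eq_one
    intro x hx
    simp only [List.mem_map, List.mem_reverse, List.mem_ofFn] at hx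
    obtain ⟨M, ⟨i, rfl⟩, rfl⟩ := hx
    simp only [Matrix.coe_detMonoidHom, todaFactor, Matrix.det_fin_two_of, mul_zero, zero_sub,
      ← C_mul, mul_neg, neg_neg, ← Units.val_mul, Units.mul_inv]
    simp
  · rw [hQ]; exact hmon
  · rw [hQ]; exact hdeg
  · rw [hQ, hc1 hK, todaC1, hsum1]
  · intro h2
    rw [hQ, hc2 h2, todaC2]
    have hpair : (∑ ij ∈ Finset.univ.filter (fun ij : Fin K × Fin K => ij.1 < ij.2),
        p ij.1 * p ij.2) = ∑ j ∈ Finset.range K, ∑ i ∈ Finset.range j, P i * P j := by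
      rw [Finset.sum_filter, Fintype.sum_prod_type, Finset.sum_comm]
      have hinner : ∀ j : Fin K, (∑ i : Fin K, if i < j then p i * p j else 0)
          = ∑ i ∈ Finset.range (j : ℕ), P i * P (j : ℕ) := by
        intro j
        calc (∑ i : Fin K, if i < j then p i * p j else 0)
            = ∑ i : Fin K, (fun i : ℕ => if i < (j : ℕ) then P i * P (j : ℕ) else 0) (i : ℕ) := by
              refine Finset.sum_congr rfl fun i _ => ?_
              simp only [Fin.lt_def, hP i, hP j]
          _ = ∑ i ∈ Finset.range K, (if i < (j : ℕ) then P i * P (j : ℕ) else 0) := by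
              exact Fin.sum_univ_eq_sum_range (fun i : ℕ => if i < (j : ℕ) then P i * P (j : ℕ) else 0) K
          _ = ∑ i ∈ Finset.range (j : ℕ), (if i < (j : ℕ) then P i * P (j : ℕ) else 0) := by
              refine (Finset.sum_subset (Finset.range_subset_range.2 j.isLt.le) ?_).symm
              intro x _ hx
              rw [Finset.mem_range, not_lt] at hx
              rw [if_neg (by omega)]
          _ = ∑ i ∈ Finset.range (j : ℕ), P i * P (j : ℕ) := by
              refine Finset.sum_congr rfl fun i hi => ?_
              rw [Finset.mem_range] at hi
              rw [if_pos hi]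
      calc ∑ j : Fin K, ∑ i : Fin K, (if i < j then p i * p j else 0)
          = ∑ j : Fin K, (fun j : ℕ => ∑ i ∈ Finset.range j, P i * P j) (j : ℕ) :=
            Finset.sum_congr rfl fun j _ => hinner j
        _ = ∑ j ∈ Finset.range K, ∑ i ∈ Finset.range j, P i * P j := by
            exact Fin.sum_univ_eq_sum_range (fun j : ℕ => ∑ i ∈ Finset.range j, P i * P j) K
    have hzsum : (∑ i : Fin K,
        (if h : (i : ℕ) + 1 < K then
          ((z ⟨(i : ℕ) + 1, h⟩ : R) * (((z i)⁻¹ : Rˣ) : R)) else 0))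
        = ∑ i ∈ Finset.range (K-1), ((Z (i+1) : R) * (((Z i)⁻¹ : Rˣ) : R)) := by
      calc (∑ i : Fin K, (if h : (i : ℕ) + 1 < K then
            ((z ⟨(i : ℕ) + 1, h⟩ : R) * (((z i)⁻¹ : Rˣ) : R)) else 0))
          = ∑ i : Fin K, (fun i : ℕ => if i + 1 < K then
              ((Z (i+1) : R) * (((Z i)⁻¹ : Rˣ) : R)) else 0) (i : ℕ) := by
            refine Finset.sum_congr rfl fun i _ => ?_
            beta_reduce
            by_cases h : (i : ℕ) + 1 < K
            · rw [dif_pos h, if_pos h]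
              have hz1 : Z ((i : ℕ) + 1) = z ⟨(i : ℕ) + 1, h⟩ := by simp [hZdef, h]
              rw [hz1, hZ i]
            · rw [dif_neg h, if_neg h]
        _ = ∑ i ∈ Finset.range K, (if i + 1 < K then
              ((Z (i+1) : R) * (((Z i)⁻¹ : Rˣ) : R)) else 0) := by
            exact Fin.sum_univ_eq_sum_range
              (fun i : ℕ => if i + 1 < K then ((Z (i+1) : R) * (((Z i)⁻¹ : Rˣ) : R)) else 0) K
        _ = ∑ i ∈ Finset.range (K-1), (if i + 1 < K then
              ((Z (i+1) : R) * (((Z i)⁻¹ : Rˣ) : R)) else 0) := by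
            refine (Finset.sum_subset (Finset.range_subset_range.2 (by omega)) ?_).symm
            intro x _ hx
            rw [Finset.mem_range] at hx
            rw [if_neg (by omega)]
        _ = ∑ i ∈ Finset.range (K-1), ((Z (i+1) : R) * (((Z i)⁻¹ : Rˣ) : R)) := by
            refine Finset.sum_congr rfl fun i hi => ?_
            rw [Finset.mem_range] at hi
            rw [if_pos (by omega)]
    rw [hpair, hzsum]
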